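/- Suppose β ≥ 3, p ≥ β, and consider the Besov-type condition with spatial regularity exponent α. Via Hölder interpolation in time and Besov interpolation in space between L^β B^α_{p,∞}, L^2 H^1, and L^∞ L^2, the minimal α for which L^β B^α_{p,∞} ∩ L^2 H^1 ∩ L^∞ L^2 embeds into L^3 B^{1/3}_{3,∞} is α = 2/β + 2/p − 1. More precisely: solving (1/3) = x/β + y/2, 1/p' = x/p + (1−x)/2, α' = xα + y, subject to α' ≥ 3(1/p' − 1/3) + 1/3, 0 ≤ x, y, x + y ≤ 1, the minimal admissible α equals (3/p + 2/β − 3/2) + 1/(6x*) where x* = max over admissible x, and when β ≥ 3 and p ≥ β this minimum equals 2/β + 2/p − 1. -/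

import Mathlib

theorem stmt10 (β p : ℝ) (hβ : 3 ≤ β) (hp : β ≤ p) :
    IsLeast {α : ℝ | ∃ x y : ℝ, 0 < x ∧ 0 ≤ y ∧ x + y ≤ 1 ∧
        1/3 = x/β + y/2 ∧
        1/3 ≤ x/p + (1-x)/2 ∧
        3 * (x/p + (1-x)/2 - 1/3) + 1/3 ≤ x*α + y}
      (2/β + 2/p - 1) := by
  have hβ0 : (0:ℝ) < β := by linarith
  have hp0 : (0:ℝ) < p := by linarith
  have hp2 : (0:ℝ) < p - 2 := by linarith
  have hβne : β ≠ 0 := ne_of_gt hβ0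
  have hpne : p ≠ 0 := ne_of_gt hp0
  have hp2ne : p - 2 ≠ 0 := ne_of_gt hp2
  constructor
  · refine ⟨p/(3*(p-2)), 2/3 - 2*(p/(3*(p-2)))/β, ?_, ?_, ?_, ?_, ?_, ?_⟩
    · positivity
    · have hxb : p/(3*(p-2)) ≤ β/3 := by
        rw [div_le_div_iff₀ (by positivity) (by norm_num)]
        nlinarith
      have h2 : 2*(p/(3*(p-2)))/β ≤ 2*(β/3)/β := by gcongr
      have h3 : 2*(β/3)/β = 2/3 := by field_simp
      linarith
    · have h : p/(3*(p-2)) ≤ β/(3*(β-2)) := by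
        rw [div_le_div_iff₀ (by positivity) (by nlinarith : (0:ℝ) < 3*(β-2))]
        nlinarith
      have h2 : 2*(p/(3*(p-2)))/β ≥ 2*(p/(3*(p-2)))/β := le_refl _
      have hx : p/(3*(p-2)) * (1 - 2/β) ≤ 1/3 := by
        rw [← sub_nonneg]
        field_simp
        nlinarith
      have : 2*(p/(3*(p-2)))/β = p/(3*(p-2)) * (2/β) := by ring
      nlinarith [hx]
    · field_simp
      ring
    · field_simp
      ring_nf
      nlinarith
    · field_simp
      ring_nf
      nlinarith
  · rintro α ⟨x, y, hx, hy, hxy, h1, h2, h3⟩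
    have e1 : x/β = 1/3 - y/2 := by linarith
    have key : x * (2/β + 2/p - 1) ≤ x * α := by
      have expand : x * (2/β + 2/p - 1) = 2*(x/β) + 2*(x/p) - x := by ring
      rw [expand, e1]
      linarith
    exact le_of_mul_le_mul_left key hx
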